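/- Suppose the solution is constant: p = β𝟙, v_x = γ_x 𝟙, v_y = γ_y 𝟙 on every element, with β, γ_x, γ_y ∈ ℝ. If S_x 𝟙 = S_y 𝟙 = 0, the fluxes satisfy v_n* = v_n⁻ and p* = β on every mortar (since jumps vanish), and each element satisfies the discrete divergence theorem wᵀ S_xᵀ 𝟙 = Σ_g (n_x^{-g} w⁻)ᵀ S_J^g W^g 𝟙^g for all w ∈ V_h (and analogously for y), then the semidiscrete scheme gives dp/dt = 0, dv_x/dt = 0, dv_y/dt = 0, i.e., constants are preserved. -/

import Mathlib

open Matrix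

lemma aux_dot_all_zero {d : ℕ} (v : Fin d → ℝ) (h : ∀ w : Fin d → ℝ, w ⬝ᵥ v = 0) :
    v = 0 := by
  have := h v
  rwa [dotProduct_comm, dotProduct_self_eq_zero] at this

lemma aux_posdef_cancel {d : ℕ} {MJ : Matrix (Fin d) (Fin d) ℝ} (hMJ : MJ.PosDef)
    {x : Fin d → ℝ} (h : MJ *ᵥ x = 0) : x = 0 := by
  by_contra hx
  have := hMJ.dotProduct_mulVec_pos hx
  rw [h] at this
  simp at this

lemma aux_dot_sum {d : ℕ} {ι : Type*} (s : Finset ι) (w : Fin d → ℝ) (f : ι → Fin d → ℝ) :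
    w ⬝ᵥ (∑ g ∈ s, f g) = ∑ g ∈ s, w ⬝ᵥ f g := by
  simp only [dotProduct, Finset.sum_apply, Finset.mul_sum]
  exact Finset.sum_comm

lemma aux_transfer {d m : ℕ} (L : Matrix (Fin m) (Fin d) ℝ) (n : Fin m → ℝ)
    (u : Fin m → ℝ) (w : Fin d → ℝ) :
    (fun i => n i * (L *ᵥ w) i) ⬝ᵥ u = w ⬝ᵥ (Lᵀ *ᵥ fun i => n i * u i) := by
  simp only [dotProduct, mulVec, transpose_apply, Finset.mul_sum, Finset.sum_mul]
  rw [Finset.sum_comm]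
  apply Finset.sum_congr rfl; intro i _
  apply Finset.sum_congr rfl; intro j _
  ring

/-- Constant preservation: for a globally constant state `p = β𝟙`, `v_x = γ_x 𝟙`,
`v_y = γ_y 𝟙`, if `S_x 𝟙 = S_y 𝟙 = 0`, the fluxes satisfy `v_n* = v_n⁻` and `p* = β𝟙` on
every mortar, and the element satisfies the discrete divergence theorem
`wᵀ S_xᵀ 𝟙 = Σ_g (n_x w⁻)ᵀ S_J W 𝟙` (and analogously for `y`) for all `w`, then the
semidiscrete scheme with invertible (SPD) mass matrix gives
`dp/dt = 0`, `dv_x/dt = 0`, `dv_y/dt = 0`. -/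
theorem constant_preservation
    {G : Type*} [DecidableEq G] {d : ℕ} (q : G → ℕ)
    (Ge : Finset G)
    (MJ Sx Sy : Matrix (Fin d) (Fin d) ℝ) (hMJ : MJ.PosDef)
    (SJW : ∀ g : G, Matrix (Fin (q g)) (Fin (q g)) ℝ)
    (Lg : ∀ g : G, Matrix (Fin (q g)) (Fin d) ℝ)
    (nx ny : ∀ g : G, Fin (q g) → ℝ)
    (β γx γy : ℝ)
    (p vx vy dpdt dvxdt dvydt : Fin d → ℝ)
    (hp : p = fun _ => β) (hvx : vx = fun _ => γx) (hvy : vy = fun _ => γy)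
    (vnminus vstar pstar : ∀ g : G, Fin (q g) → ℝ)
    (hvn : ∀ g, vnminus g = fun i => nx g i * (Lg g *ᵥ vx) i + ny g i * (Lg g *ᵥ vy) i)
    (hvstar : ∀ g, vstar g = vnminus g)
    (hpstar : ∀ g, pstar g = fun _ => β)
    (hSx1 : Sx *ᵥ (fun _ => (1 : ℝ)) = 0)
    (hSy1 : Sy *ᵥ (fun _ => (1 : ℝ)) = 0)
    (hdivx : ∀ w : Fin d → ℝ, w ⬝ᵥ (Sxᵀ *ᵥ (fun _ => (1 : ℝ)))
      = ∑ g ∈ Ge, (fun i => nx g i * (Lg g *ᵥ w) i) ⬝ᵥ (SJW g *ᵥ (fun _ => (1 : ℝ))))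
    (hdivy : ∀ w : Fin d → ℝ, w ⬝ᵥ (Syᵀ *ᵥ (fun _ => (1 : ℝ)))
      = ∑ g ∈ Ge, (fun i => ny g i * (Lg g *ᵥ w) i) ⬝ᵥ (SJW g *ᵥ (fun _ => (1 : ℝ))))
    (hschemep : MJ *ᵥ dpdt + Sx *ᵥ vx + Sy *ᵥ vy
      = -∑ g ∈ Ge, (Lg g)ᵀ *ᵥ (SJW g *ᵥ (vstar g - vnminus g)))
    (hschemex : MJ *ᵥ dvxdt - Sxᵀ *ᵥ p
      = -∑ g ∈ Ge, (Lg g)ᵀ *ᵥ (fun i => nx g i * (SJW g *ᵥ pstar g) i))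
    (hschemey : MJ *ᵥ dvydt - Syᵀ *ᵥ p
      = -∑ g ∈ Ge, (Lg g)ᵀ *ᵥ (fun i => ny g i * (SJW g *ᵥ pstar g) i)) :
    dpdt = 0 ∧ dvxdt = 0 ∧ dvydt = 0 := by
  -- dpdt
  have hSxvx : Sx *ᵥ vx = 0 := by
    rw [hvx]
    have h : (fun _ : Fin d => γx) = γx • (fun _ : Fin d => (1 : ℝ)) := by funext i; simp
    rw [h, mulVec_smul, hSx1, smul_zero]
  have hSyvy : Sy *ᵥ vy = 0 := by
    rw [hvy]
    have h : (fun _ : Fin d => γy) = γy • (fun _ : Fin d => (1 : ℝ)) := by funext i; simp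
    rw [h, mulVec_smul, hSy1, smul_zero]
  have h0 : (-∑ g ∈ Ge, (Lg g)ᵀ *ᵥ (SJW g *ᵥ (vstar g - vnminus g))) = 0 := by
    apply neg_eq_zero.mpr
    apply Finset.sum_eq_zero
    intro g _
    rw [hvstar g, sub_self, mulVec_zero, mulVec_zero]
  have hdp : MJ *ᵥ dpdt = 0 := by
    rw [hSxvx, hSyvy, h0, add_zero, add_zero] at hschemep
    exact hschemep
  have hpz : dpdt = 0 := aux_posdef_cancel hMJ hdp
  -- divergence identities
  have hdivx0 : Sxᵀ *ᵥ (fun _ => (1 : ℝ))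
      = ∑ g ∈ Ge, (Lg g)ᵀ *ᵥ (fun i => nx g i * (SJW g *ᵥ fun _ => (1 : ℝ)) i) := by
    rw [← sub_eq_zero]
    apply aux_dot_all_zero
    intro w
    rw [dotProduct_sub, hdivx w, aux_dot_sum, sub_eq_zero]
    exact Finset.sum_congr rfl fun g _ => aux_transfer (Lg g) (nx g) _ w
  have hdivy0 : Syᵀ *ᵥ (fun _ => (1 : ℝ))
      = ∑ g ∈ Ge, (Lg g)ᵀ *ᵥ (fun i => ny g i * (SJW g *ᵥ fun _ => (1 : ℝ)) i) := by
    rw [← sub_eq_zero]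
    apply aux_dot_all_zero
    intro w
    rw [dotProduct_sub, hdivy w, aux_dot_sum, sub_eq_zero]
    exact Finset.sum_congr rfl fun g _ => aux_transfer (Lg g) (ny g) _ w
  have hpβ : ∀ (S : Matrix (Fin d) (Fin d) ℝ), S *ᵥ p = β • (S *ᵥ fun _ => (1 : ℝ)) := by
    intro S
    rw [hp]
    have h : (fun _ : Fin d => β) = β • (fun _ : Fin d => (1 : ℝ)) := by funext i; simp
    rw [h, mulVec_smul]
  have hterm : ∀ (n : ∀ g : G, Fin (q g) → ℝ) (g : G),
      (Lg g)ᵀ *ᵥ (fun i => n g i * (SJW g *ᵥ pstar g) i)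
      = β • ((Lg g)ᵀ *ᵥ (fun i => n g i * (SJW g *ᵥ fun _ => (1 : ℝ)) i)) := by
    intro n g
    rw [← mulVec_smul]
    congr 1
    funext i
    rw [hpstar g]
    simp only [mulVec, dotProduct, Pi.smul_apply, smul_eq_mul, Finset.mul_sum]
    apply Finset.sum_congr rfl
    intro j _
    ring
  have hdvx : MJ *ᵥ dvxdt = 0 := by
    have h := hschemex
    rw [sub_eq_iff_eq_add] at h
    rw [h, hpβ Sxᵀ, hdivx0, Finset.smul_sum]
    rw [neg_add_eq_zero]
    apply Finset.sum_congr rfl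
    intro g _
    exact hterm nx g
  have hdvy : MJ *ᵥ dvydt = 0 := by
    have h := hschemey
    rw [sub_eq_iff_eq_add] at h
    rw [h, hpβ Syᵀ, hdivy0, Finset.smul_sum]
    rw [neg_add_eq_zero]
    apply Finset.sum_congr rfl
    intro g _
    exact hterm ny g
  exact ⟨hpz, aux_posdef_cancel hMJ hdvx, aux_posdef_cancel hMJ hdvy⟩
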